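/- In ℚ⟦X⟧ one has the identity Σ_{n=0}^∞ a^o_ed(n)·X^n = ( (−X²; X²)_∞ / (X; X²)_∞ ) · ( Σ_{n=0}^∞ X^{2n²+n} / (−X²; X²)_n − Σ_{n=0}^∞ X^{(2n+1)(n+1)} / (−X²; X²)_n ). -/

import Mathlib

open PowerSeries Finset
open scoped Classical

noncomputable section

instance : TopologicalSpace (PowerSeries ℚ) :=
  @Pi.topologicalSpace (Unit →₀ ℕ) (fun _ => ℚ) (fun _ => inferInstance)

/-- `(ε X^b ; X^d)_∞ = ∏_{k=0}^∞ (1 - ε X^{b+dk})`, a coefficientwise-convergent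
infinite product in `ℚ⟦X⟧` with the product topology. -/
def pochInf (ε : ℚ) (b d : ℕ) : PowerSeries ℚ :=
  ∏' k : ℕ, (1 - PowerSeries.C (R := ℚ) ε * PowerSeries.X ^ (b + d * k))

/-- `(ε X^b ; X^d)_m = ∏_{k=0}^{m-1} (1 - ε X^{b+dk})` -/
def pochFin (ε : ℚ) (b d m : ℕ) : PowerSeries ℚ :=
  ∏ k ∈ Finset.range m, (1 - PowerSeries.C (R := ℚ) ε * PowerSeries.X ^ (b + d * k))

/-- the smallest positive integer that is not a part of `l` -/
def pmex {n : ℕ} (l : n.Partition) : ℕ := sInf {k : ℕ | 0 < k ∧ k ∉ l.parts}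

/-- the smallest odd positive integer that is not a part of `l` -/
def pmoex {n : ℕ} (l : n.Partition) : ℕ := sInf {k : ℕ | Odd k ∧ k ∉ l.parts}

/-- the smallest even positive integer that is not a part of `l` -/
def pmeex {n : ℕ} (l : n.Partition) : ℕ := sInf {k : ℕ | Even k ∧ 0 < k ∧ k ∉ l.parts}

/-- every odd part occurs at most once -/
def OddDistinct {n : ℕ} (l : n.Partition) : Prop := ∀ i, Odd i → l.parts.count i ≤ 1

/-- every even part occurs at most once -/
def EvenDistinct {n : ℕ} (l : n.Partition) : Prop := ∀ i, Even i → l.parts.count i ≤ 1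

/-- `a^o_ed(n)`: number of partitions of `n` with distinct even parts and odd mex -/
def aoed (n : ℕ) : ℕ :=
  (Finset.univ.filter fun l : n.Partition => EvenDistinct l ∧ Odd (pmex l)).card

instance : T2Space (PowerSeries ℚ) :=
  inferInstanceAs (T2Space ((Unit →₀ ℕ) → ℚ))

namespace Aux

open Filter
variable {α : Type*}
open Finset.HasAntidiagonal
universe u
variable {ι : Type u}

lemma finsupp_eq_single (d : Unit →₀ ℕ) : d = Finsupp.single () (d ()) := by
  ext; simp

/-- A sufficient criterion for `HasSum` in `ℚ⟦X⟧` with the product topology. -/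
lemma hasSum_of_coeff (f : ℕ → PowerSeries ℚ) (S : PowerSeries ℚ)
    (h : ∀ N : ℕ, ∀ s : Finset ℕ, Finset.range (N + 1) ⊆ s →
      coeff (R := ℚ) N (∑ i ∈ s, f i) = coeff (R := ℚ) N S) : HasSum f S := by
  rw [HasSum, SummationFilter.unconditional_filter]
  refine tendsto_pi_nhds.2 ?_
  intro d
  have key : ∀ s : Finset ℕ, Finset.range (d () + 1) ⊆ s →
      (∑ i ∈ s, f i) d = S d := by
    intro s hs
    have h1 : (∑ i ∈ s, f i) d = coeff (R := ℚ) (d ()) (∑ i ∈ s, f i) := by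
      conv_lhs => rw [finsupp_eq_single d]
      rfl
    have h2 : S d = coeff (R := ℚ) (d ()) S := by
      conv_lhs => rw [finsupp_eq_single d]
      rfl
    rw [h1, h2]
    exact h _ _ hs
  apply Tendsto.congr' _ tendsto_const_nhds
  filter_upwards [eventually_ge_atTop (Finset.range (d () + 1))] with s hs
  exact (key s hs).symm

/-- A sufficient criterion for `HasProd` in `ℚ⟦X⟧` with the product topology. -/
lemma hasProd_of_coeff (f : ℕ → PowerSeries ℚ) (S : PowerSeries ℚ)
    (h : ∀ N : ℕ, ∀ s : Finset ℕ, Finset.range (N + 1) ⊆ s →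
      coeff (R := ℚ) N (∏ i ∈ s, f i) = coeff (R := ℚ) N S) : HasProd f S := by
  rw [HasProd, SummationFilter.unconditional_filter]
  refine tendsto_pi_nhds.2 ?_
  intro d
  have key : ∀ s : Finset ℕ, Finset.range (d () + 1) ⊆ s →
      (∏ i ∈ s, f i) d = S d := by
    intro s hs
    have h1 : (∏ i ∈ s, f i) d = coeff (R := ℚ) (d ()) (∏ i ∈ s, f i) := by
      conv_lhs => rw [finsupp_eq_single d]
      rfl
    have h2 : S d = coeff (R := ℚ) (d ()) S := by
      conv_lhs => rw [finsupp_eq_single d]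
      rfl
    rw [h1, h2]
    exact h _ _ hs
  apply Tendsto.congr' _ tendsto_const_nhds
  filter_upwards [eventually_ge_atTop (Finset.range (d () + 1))] with s hs
  exact (key s hs).symm

/-- equality of coefficients up to degree `N` -/
def EqMod (N : ℕ) (f g : PowerSeries ℚ) : Prop := ∀ j ≤ N, coeff (R := ℚ) j f = coeff (R := ℚ) j g

lemma EqMod.refl (N : ℕ) (f : PowerSeries ℚ) : EqMod N f f := fun _ _ => rfl

lemma EqMod.symm {N f g} (h : EqMod N f g) : EqMod N g f := fun j hj => (h j hj).symm

lemma EqMod.trans {N f g h'} (h1 : EqMod N f g) (h2 : EqMod N g h') : EqMod N f h' :=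
  fun j hj => (h1 j hj).trans (h2 j hj)

lemma EqMod.mul {N f g f' g'} (h1 : EqMod N f f') (h2 : EqMod N g g') :
    EqMod N (f * g) (f' * g') := by
  intro j hj
  rw [coeff_mul, coeff_mul]
  apply Finset.sum_congr rfl
  rintro ⟨p, q⟩ hpq
  rw [Finset.HasAntidiagonal.mem_antidiagonal] at hpq
  rw [h1 p (le_trans (by omega) hj), h2 q (le_trans (by omega) hj)]

lemma EqMod.sub {N f g f' g'} (h1 : EqMod N f f') (h2 : EqMod N g g') :
    EqMod N (f - g) (f' - g') := by
  intro j hj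
  simp only [map_sub, h1 j hj, h2 j hj]

lemma EqMod.inv {N f g} (h : EqMod N f g) :
    EqMod N f⁻¹ g⁻¹ := by
  have hc : constantCoeff (R := ℚ) f = constantCoeff (R := ℚ) g := by
    have := h 0 (Nat.zero_le N)
    simpa [coeff_zero_eq_constantCoeff] using this
  intro j hj
  induction j using Nat.strong_induction_on with
  | _ j ih =>
    rw [PowerSeries.coeff_inv, PowerSeries.coeff_inv]
    split_ifs with hz
    · rw [hc]
    · rw [hc]
      congr 1
      apply Finset.sum_congr rfl
      rintro ⟨p, q⟩ hpq
      rw [Finset.HasAntidiagonal.mem_antidiagonal] at hpq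
      split_ifs with hq
      · rw [h p (le_trans (by omega) hj), ih q (by omega) (le_trans (by omega) hj)]
      · rfl

lemma EqMod.one_of_forall {N : ℕ} {t : Finset ℕ} {f : ℕ → PowerSeries ℚ}
    (h : ∀ k ∈ t, EqMod N (f k) 1) : EqMod N (∏ k ∈ t, f k) 1 := by
  classical
  induction t using Finset.induction_on with
  | empty => simp [EqMod.refl]
  | @insert a s ha ih =>
    rw [Finset.prod_insert ha]
    have := EqMod.mul (h a (Finset.mem_insert_self a s))
      (ih fun k hk => h k (Finset.mem_insert_of_mem hk))
    simpa using this


-- a factor 1 - C ε X^e with e > N is ≡ 1 mod X^{N+1}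
lemma factor_eqMod_one (ε : ℚ) {e N : ℕ} (he : N < e) :
    EqMod N (1 - PowerSeries.C (R := ℚ) ε * PowerSeries.X ^ e) 1 := by
  intro j hj
  rw [map_sub]
  have : coeff (R := ℚ) j (PowerSeries.C (R := ℚ) ε * PowerSeries.X ^ e) = 0 := by
    rw [coeff_C_mul, coeff_X_pow, if_neg (by omega), mul_zero]
  rw [this, sub_zero]

lemma coeff_pochFin_stable (ε : ℚ) (b d : ℕ) (N : ℕ) {M M' : ℕ} (h : M ≤ M')
    (hM : N < b + d * M) (hd : 1 ≤ d) :
    coeff (R := ℚ) N (pochFin ε b d M') = coeff (R := ℚ) N (pochFin ε b d M) := by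
  induction M' with
  | zero =>
    have : M = 0 := by omega
    rw [this]
  | succ M'' ih =>
    rcases Nat.lt_or_ge M (M'' + 1) with hlt | hge
    · have hM'' : M ≤ M'' := by omega
      rw [pochFin, Finset.prod_range_succ, ← pochFin]
      have hfact : coeff (R := ℚ) N (pochFin ε b d M'' * (1 - PowerSeries.C (R := ℚ) ε * PowerSeries.X ^ (b + d * M''))) = coeff (R := ℚ) N (pochFin ε b d M'' * 1) := by
        apply EqMod.mul (fun j hj => rfl) (factor_eqMod_one ε (by nlinarith [Nat.mul_le_mul_left d hM''])) N le_rfl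
      rw [hfact, mul_one, ih hM'']
    · have : M = M'' + 1 := by omega
      rw [this]
  -- zero case fix below

lemma constantCoeff_pochFin (ε : ℚ) {b : ℕ} (hb : 1 ≤ b) (d M : ℕ) :
    constantCoeff (R := ℚ) (pochFin ε b d M) = 1 := by
  rw [pochFin, map_prod]
  apply Finset.prod_eq_one
  intro k _
  rw [map_sub, map_one, map_mul, constantCoeff_C, map_pow, constantCoeff_X,
    zero_pow (by omega : b + d * k ≠ 0), mul_zero, sub_zero]

lemma pochInf_eqMod (ε : ℚ) (b d : ℕ) (hb : 1 ≤ b) (hd : 1 ≤ d) (N : ℕ) :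
    EqMod N (pochInf ε b d) (pochFin ε b d (N + 1)) := by
  have hstab := coeff_pochFin_stable ε b d
  have hp : HasProd (fun k => 1 - PowerSeries.C (R := ℚ) ε * PowerSeries.X ^ (b + d * k))
      (PowerSeries.mk fun j => coeff (R := ℚ) j (pochFin ε b d (j + 1))) := by
    apply hasProd_of_coeff
    intro N s hs
    rw [← Finset.prod_sdiff hs]
    have h1 : coeff (R := ℚ) N ((∏ i ∈ s \ Finset.range (N+1), (1 - PowerSeries.C (R := ℚ) ε * PowerSeries.X ^ (b + d * i))) * ∏ i ∈ Finset.range (N+1), (1 - PowerSeries.C (R := ℚ) ε * PowerSeries.X ^ (b + d * i))) = coeff (R := ℚ) N (1 * pochFin ε b d (N+1)) := by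
      apply EqMod.mul (EqMod.one_of_forall ?_) (fun j hj => rfl) N le_rfl
      intro k hk
      apply factor_eqMod_one
      rw [Finset.mem_sdiff, Finset.mem_range] at hk
      have : N + 1 ≤ k := by omega
      nlinarith
    rw [h1, one_mul, coeff_mk]
  have : pochInf ε b d = PowerSeries.mk fun j => coeff (R := ℚ) j (pochFin ε b d (j + 1)) :=
    hp.tprod_eq
  intro j hj
  rw [this, coeff_mk]
  exact (hstab j (M := j + 1) (M' := N + 1) (by omega) (by nlinarith) hd).symm

/-- A convenience constructor for the power series whose coefficients indicate a subset. -/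
def indicatorSeries (α : Type*) [Semiring α] (s : Set ℕ) : PowerSeries α :=
  PowerSeries.mk fun n => if n ∈ s then 1 else 0

theorem coeff_indicator (s : Set ℕ) [Semiring α] (n : ℕ) :
    coeff (R := α) n (indicatorSeries _ s) = if n ∈ s then 1 else 0 :=
  coeff_mk _ _

theorem coeff_indicator_pos (s : Set ℕ) [Semiring α] (n : ℕ) (h : n ∈ s) :
    coeff (R := α) n (indicatorSeries _ s) = 1 := by rw [coeff_indicator, if_pos h]

theorem coeff_indicator_neg (s : Set ℕ) [Semiring α] (n : ℕ) (h : n ∉ s) :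
    coeff (R := α) n (indicatorSeries _ s) = 0 := by rw [coeff_indicator, if_neg h]

theorem constantCoeff_indicator (s : Set ℕ) [Semiring α] :
    constantCoeff (R := α) (indicatorSeries _ s) = if 0 ∈ s then 1 else 0 :=
  rfl

theorem two_series (i : ℕ) [Semiring α] :
    1 + (X : PowerSeries α) ^ i.succ = indicatorSeries α {0, i.succ} := by
  ext n
  simp only [coeff_indicator, coeff_one, coeff_X_pow, Set.mem_insert_iff, Set.mem_singleton_iff,
    map_add]
  cases' n with d
  · simp [(Nat.succ_ne_zero i).symm]
  · simp [Nat.succ_ne_zero d]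

theorem num_series' [Field α] (i : ℕ) :
    (1 - (X : PowerSeries α) ^ (i + 1))⁻¹ = indicatorSeries α {k | i + 1 ∣ k} := by
  rw [PowerSeries.inv_eq_iff_mul_eq_one]
  · ext n
    cases n with
    | zero => simp [mul_sub, zero_pow, constantCoeff_indicator]
    | succ n =>
      simp only [coeff_one, if_false, mul_sub, mul_one, coeff_indicator,
        LinearMap.map_sub, reduceCtorEq]
      simp_rw [coeff_mul, coeff_X_pow, coeff_indicator, @boole_mul _ _ _ _]
      simp only [← ite_and]
      erw [Finset.sum_boole]
      simp only [sub_eq_iff_eq_add, zero_add]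
      symm
      split_ifs with h
      · suffices #{a ∈ antidiagonal (n + 1) | i + 1 ∣ a.fst ∧ a.snd = i + 1} = 1 by
          simp only [Set.mem_setOf_eq]; convert congr_arg ((↑) : ℕ → α) this; norm_cast
        rw [card_eq_one]
        cases' h with p hp
        refine ⟨((i + 1) * (p - 1), i + 1), ?_⟩
        ext ⟨a₁, a₂⟩
        simp only [mem_filter, Prod.mk.injEq, HasAntidiagonal.mem_antidiagonal, mem_singleton]
        constructor
        · rintro ⟨a_left, ⟨a, rfl⟩, rfl⟩
          refine ⟨?_, rfl⟩
          rw [Nat.mul_sub_left_distrib, ← hp, ← a_left, mul_one, Nat.add_sub_cancel]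
        · rintro ⟨rfl, rfl⟩
          match p with
          | 0 => rw [mul_zero] at hp; cases hp
          | p + 1 => rw [hp]; simp [mul_add]
      · suffices #{a ∈ antidiagonal (n + 1) | i + 1 ∣ a.fst ∧ a.snd = i + 1} = 0 by
          simp only [Set.mem_setOf_eq]; convert congr_arg ((↑) : ℕ → α) this; norm_cast
        rw [card_eq_zero]
        apply eq_empty_of_forall_notMem
        simp only [Prod.forall, mem_filter, not_and, HasAntidiagonal.mem_antidiagonal]
        rintro _ h₁ h₂ ⟨a, rfl⟩ rfl
        apply h
        simp [← h₂]
  · simp [zero_pow]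

def mkOdd : ℕ ↪ ℕ :=
  ⟨fun i => 2 * i + 1, fun x y h => by linarith⟩

-- The main workhorse of the partition theorem proof.
theorem partialGF_prop (α : Type*) [CommSemiring α] (n : ℕ) (s : Finset ℕ) (hs : ∀ i ∈ s, 0 < i)
    (c : ℕ → Set ℕ) (hc : ∀ i, i ∉ s → 0 ∈ c i) :
    #{p : n.Partition | (∀ j, p.parts.count j ∈ c j) ∧ ∀ j ∈ p.parts, j ∈ s} =
      coeff (R := α) n (∏ i ∈ s, indicatorSeries α ((· * i) '' c i)) := by
  simp_rw [coeff_prod, coeff_indicator, prod_boole, sum_boole]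
  apply congr_arg
  simp only [mem_univ, forall_true_left, not_and, not_forall, exists_prop,
    Set.mem_image, not_exists]
  set φ : (a : Nat.Partition n) →
    a ∈ filter (fun p ↦ (∀ (j : ℕ), Multiset.count j p.parts ∈ c j) ∧ ∀ j ∈ p.parts, j ∈ s) univ →
    ℕ →₀ ℕ := fun p _ => {
      toFun := fun i => Multiset.count i p.parts • i
      support := Finset.filter (fun i => i ≠ 0) p.parts.toFinset
      mem_support_toFun := fun a => by
        simp only [smul_eq_mul, ne_eq, mul_eq_zero, Multiset.count_eq_zero]
        rw [not_or, not_not]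
        simp only [Multiset.mem_toFinset, not_not, mem_filter] }
  refine Finset.card_bij φ ?_ ?_ ?_
  · intro a ha
    simp only [φ, not_forall, not_exists, not_and, exists_prop, mem_filter]
    rw [mem_finsuppAntidiag]
    dsimp only [ne_eq, smul_eq_mul, id_eq, eq_mpr_eq_cast, le_eq_subset, Finsupp.coe_mk]
    simp only [mem_univ, forall_true_left, not_and, not_forall, exists_prop,
      mem_filter, true_and] at ha
    refine ⟨⟨?_, fun i ↦ ?_⟩, fun i _ ↦ ⟨a.parts.count i, ha.1 i, rfl⟩⟩
    · conv_rhs => simp [← a.parts_sum]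
      rw [sum_multiset_count_of_subset _ s]
      · simp only [smul_eq_mul]
      · intro i
        simp only [Multiset.mem_toFinset, not_not, mem_filter]
        apply ha.2
    · simp only [ne_eq, Multiset.mem_toFinset, not_not, mem_filter, and_imp]
      exact fun hi _ ↦ ha.2 i hi
  · intro p₁ hp₁ p₂ hp₂ h
    apply Nat.Partition.ext
    simp only [true_and, mem_univ, mem_filter] at hp₁ hp₂
    ext i
    simp only [φ, ne_eq, Multiset.mem_toFinset, not_not, smul_eq_mul, Finsupp.mk.injEq] at h
    by_cases hi : i = 0
    · rw [hi]
      rw [Multiset.count_eq_zero_of_notMem]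
      · rw [Multiset.count_eq_zero_of_notMem]
        intro a; exact Nat.lt_irrefl 0 (hs 0 (hp₂.2 0 a))
      intro a; exact Nat.lt_irrefl 0 (hs 0 (hp₁.2 0 a))
    · rw [← mul_left_inj' hi]
      rw [funext_iff] at h
      exact h.2 i
  · simp only [φ, mem_filter, mem_finsuppAntidiag, mem_univ, exists_prop, true_and, and_assoc]
    rintro f ⟨hf, hf₃, hf₄⟩
    have hf' : f ∈ finsuppAntidiag s n := mem_finsuppAntidiag.mpr ⟨hf, hf₃⟩
    simp only [mem_finsuppAntidiag] at hf'
    refine ⟨⟨∑ i ∈ s, Multiset.replicate (f i / i) i, ?_, ?_⟩, ?_, ?_, ?_⟩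
    · intro i hi
      simp only [exists_prop, Multiset.mem_sum, Finset.mem_map, Function.Embedding.coeFn_mk] at hi
      rcases hi with ⟨t, ht, z⟩
      apply hs
      rwa [Multiset.eq_of_mem_replicate z]
    · simp_rw [Multiset.sum_sum, Multiset.sum_replicate, Nat.nsmul_eq_mul]
      rw [← hf'.1]
      refine sum_congr rfl fun i hi => Nat.div_mul_cancel ?_
      rcases hf₄ i hi with ⟨w, _, hw₂⟩
      rw [← hw₂]
      exact dvd_mul_left _ _
    · intro i
      simp_rw [Multiset.count_sum', Multiset.count_replicate, sum_ite_eq']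
      split_ifs with h
      · rcases hf₄ i h with ⟨w, hw₁, hw₂⟩
        rwa [← hw₂, Nat.mul_div_cancel _ (hs i h)]
      · exact hc _ h
    · intro i hi
      rw [Multiset.mem_sum] at hi
      rcases hi with ⟨j, hj₁, hj₂⟩
      rwa [Multiset.eq_of_mem_replicate hj₂]
    · ext i
      simp_rw [Multiset.count_sum', Multiset.count_replicate, sum_ite_eq']
      simp only [ne_eq, Multiset.mem_toFinset, not_not, smul_eq_mul, ite_mul,
        zero_mul, Finsupp.coe_mk]
      split_ifs with h
      · apply Nat.div_mul_cancel
        rcases hf₄ i h with ⟨w, _, hw₂⟩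
        apply Dvd.intro_left _ hw₂
      · apply symm
        rw [← Finsupp.notMem_support_iff]
        exact notMem_mono hf'.2 h



lemma indicator_congr [Semiring α] {s t : Set ℕ} (h : s = t) :
    indicatorSeries α s = indicatorSeries α t := by rw [h]

-- odd, unconstrained: (·*i) '' univ
lemma indicator_univ {i : ℕ} (hi : 1 ≤ i) :
    indicatorSeries ℚ ((· * i) '' Set.univ) = (1 - (X : PowerSeries ℚ) ^ i)⁻¹ := by
  obtain ⟨j, rfl⟩ : ∃ j, i = j + 1 := ⟨i - 1, by omega⟩
  rw [num_series' j]
  apply indicator_congr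
  ext k
  simp only [Set.mem_image, Set.mem_univ, true_and, Set.mem_setOf_eq]
  constructor
  · rintro ⟨a, rfl⟩; exact dvd_mul_left _ _
  · rintro ⟨c, rfl⟩; exact ⟨c, by ring⟩

-- forced once: (·*i) '' {1}
lemma indicator_one {i : ℕ} (hi : 1 ≤ i) :
    indicatorSeries ℚ ((· * i) '' ({1} : Set ℕ)) = (X : PowerSeries ℚ) ^ i := by
  ext n
  rw [coeff_indicator, coeff_X_pow]
  simp only [Set.image_singleton, one_mul, Set.mem_singleton_iff]

-- at most once: (·*i) '' {0,1}
lemma indicator_zero_one {i : ℕ} (hi : 1 ≤ i) :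
    indicatorSeries ℚ ((· * i) '' ({0, 1} : Set ℕ)) = 1 + (X : PowerSeries ℚ) ^ i := by
  obtain ⟨j, rfl⟩ : ∃ j, i = j + 1 := ⟨i - 1, by omega⟩
  rw [show j + 1 = j.succ from rfl, two_series]
  apply indicator_congr
  ext k
  simp only [Set.mem_image, Set.mem_insert_iff, Set.mem_singleton_iff]
  constructor
  · rintro ⟨a, (rfl | rfl), rfl⟩
    · left; simp
    · right; simp
  · rintro (rfl | rfl)
    · exact ⟨0, Or.inl rfl, by simp⟩
    · exact ⟨1, Or.inr rfl, by simp⟩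

-- at least once: (·*i) '' {k | 1 ≤ k}
lemma indicator_ge_one {i : ℕ} (hi : 1 ≤ i) :
    indicatorSeries ℚ ((· * i) '' {k | 1 ≤ k}) =
      (X : PowerSeries ℚ) ^ i * (1 - (X : PowerSeries ℚ) ^ i)⁻¹ := by
  have hunit : (1 - (X : PowerSeries ℚ) ^ i) * (1 - (X : PowerSeries ℚ) ^ i)⁻¹ = 1 := by
    apply PowerSeries.mul_inv_cancel
    rw [map_sub, map_one, map_pow, constantCoeff_X, zero_pow (by omega : i ≠ 0)]
    norm_num
  have key : (X : PowerSeries ℚ) ^ i * (1 - (X : PowerSeries ℚ) ^ i)⁻¹ =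
      (1 - (X : PowerSeries ℚ) ^ i)⁻¹ - 1 := by
    have : (X : PowerSeries ℚ) ^ i * (1 - (X : PowerSeries ℚ) ^ i)⁻¹ =
        (1 - (X : PowerSeries ℚ) ^ i)⁻¹ - (1 - X ^ i) * (1 - X ^ i)⁻¹ := by ring
    rw [this, hunit]
  rw [key]
  ext n
  rw [map_sub, ← indicator_univ hi, coeff_indicator, coeff_indicator, PowerSeries.coeff_one]
  by_cases h0 : n = 0
  · subst h0
    have hmem : (0 : ℕ) ∈ (· * i) '' Set.univ := ⟨0, Set.mem_univ _, by simp⟩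
    have hnmem : (0 : ℕ) ∉ (· * i) '' {k | 1 ≤ k} := by
      rintro ⟨a, ha, hai⟩
      simp only [Set.mem_setOf_eq] at ha
      simp only at hai
      have : 1 ≤ a * i := Nat.one_le_iff_ne_zero.2 (Nat.mul_ne_zero (by omega) (by omega))
      omega
    rw [if_pos hmem, if_neg hnmem, if_pos rfl]
    norm_num
  · have hiff : n ∈ (· * i) '' {k | 1 ≤ k} ↔ n ∈ (· * i) '' Set.univ := by
      constructor
      · rintro ⟨a, _, rfl⟩; exact ⟨a, Set.mem_univ _, rfl⟩
      · rintro ⟨a, _, rfl⟩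
        refine ⟨a, ?_, rfl⟩
        simp only [Set.mem_setOf_eq]
        rcases Nat.eq_zero_or_pos a with rfl | ha
        · simp at h0
        · omega
    rw [if_neg h0, sub_zero]
    by_cases hmem : n ∈ (· * i) '' Set.univ
    · rw [if_pos hmem, if_pos (hiff.2 hmem)]
    · rw [if_neg hmem, if_neg (fun h => hmem (hiff.1 h))]

/-- allowed multiplicity sets -/
def cfun (t i : ℕ) : Set ℕ :=
  if Odd i then (if i ≤ t then {k | 1 ≤ k} else Set.univ)
  else if i ≤ t ∧ 1 ≤ i then {1} else ({0, 1} : Set ℕ)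

lemma prod_Icc_split (K : ℕ) (f : ℕ → PowerSeries ℚ) :
    ∏ i ∈ Finset.Icc 1 (2 * K), f i =
      (∏ k ∈ Finset.range K, f (2 * k + 1)) * ∏ k ∈ Finset.range K, f (2 * k + 2) := by
  induction K with
  | zero => simp
  | succ K ih =>
    have h1 : 2 * (K + 1) = 2 * K + 1 + 1 := by ring
    have h2 : Finset.Icc 1 (2 * K + 1 + 1) =
        insert (2 * K + 2) (insert (2 * K + 1) (Finset.Icc 1 (2 * K))) := by
      ext x
      simp only [Finset.mem_Icc, Finset.mem_insert]
      omega
    rw [h1, h2, Finset.prod_insert (by simp only [Finset.mem_insert, Finset.mem_Icc]; omega),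
      Finset.prod_insert (by simp only [Finset.mem_insert, Finset.mem_Icc]; omega), ih,
      Finset.prod_range_succ, Finset.prod_range_succ]
    ring

lemma sum_odds (u : ℕ) : ∑ k ∈ Finset.range u, (2 * k + 1) = u ^ 2 := by
  induction u with
  | zero => simp
  | succ u ih => rw [Finset.sum_range_succ, ih]; ring

lemma sum_evens (m : ℕ) : ∑ k ∈ Finset.range m, (2 * k + 2) = m * (m + 1) := by
  induction m with
  | zero => simp
  | succ m ih => rw [Finset.sum_range_succ, ih]; ring

lemma prod_inv_eq {s : Finset ℕ} {f : ℕ → PowerSeries ℚ}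
    (h : ∀ k ∈ s, constantCoeff (R := ℚ) (f k) ≠ 0) :
    (∏ k ∈ s, f k)⁻¹ = ∏ k ∈ s, (f k)⁻¹ := by
  have hP : (∏ k ∈ s, (f k)⁻¹) * ∏ k ∈ s, f k = 1 := by
    rw [← Finset.prod_mul_distrib]
    exact Finset.prod_eq_one fun k hk => by
      rw [mul_comm]; exact PowerSeries.mul_inv_cancel _ (h k hk)
  have hc : constantCoeff (R := ℚ) (∏ k ∈ s, f k) ≠ 0 := by
    rw [map_prod]
    exact Finset.prod_ne_zero_iff.2 h
  exact (PowerSeries.inv_eq_iff_mul_eq_one hc).2 hP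

lemma poch_even_eq (M : ℕ) :
    pochFin (-1) 2 2 M = ∏ k ∈ Finset.range M, (1 + (X : PowerSeries ℚ) ^ (2 * k + 2)) := by
  rw [pochFin]
  apply Finset.prod_congr rfl
  intro k _
  rw [map_neg, map_one, show 2 + 2 * k = 2 * k + 2 by ring]
  ring

lemma poch_odd_eq (M : ℕ) :
    pochFin 1 1 2 M = ∏ k ∈ Finset.range M, (1 - (X : PowerSeries ℚ) ^ (2 * k + 1)) := by
  rw [pochFin]
  apply Finset.prod_congr rfl
  intro k _
  rw [map_one, show 1 + 2 * k = 2 * k + 1 by ring]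
  ring

lemma constCoeff_one_sub_X_pow {e : ℕ} (he : 1 ≤ e) :
    constantCoeff (R := ℚ) (1 - (X : PowerSeries ℚ) ^ e) = 1 := by
  rw [map_sub, map_one, map_pow, constantCoeff_X, zero_pow (by omega : e ≠ 0), sub_zero]

lemma prod_eval (t K : ℕ) (ht : t ≤ 2 * K) :
    ∏ i ∈ Finset.Icc 1 (2 * K), indicatorSeries ℚ ((· * i) '' cfun t i) =
      (X : PowerSeries ℚ) ^ (((t + 1) / 2) ^ 2 + (t / 2) * (t / 2 + 1)) *
        pochFin (-1) 2 2 K * (pochFin 1 1 2 K)⁻¹ * (pochFin (-1) 2 2 (t / 2))⁻¹ := by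
  have hu : (t + 1) / 2 ≤ K := by omega
  have hm : t / 2 ≤ K := by omega
  rw [prod_Icc_split]
  -- odd factors
  have hodd : ∀ k : ℕ, indicatorSeries ℚ ((· * (2 * k + 1)) '' cfun t (2 * k + 1)) =
      (if k < (t + 1) / 2 then (X : PowerSeries ℚ) ^ (2 * k + 1) else 1) *
        (1 - (X : PowerSeries ℚ) ^ (2 * k + 1))⁻¹ := by
    intro k
    rw [cfun, if_pos (Nat.odd_iff.mpr (by omega) : Odd (2 * k + 1))]
    by_cases h : 2 * k + 1 ≤ t
    · rw [if_pos h, indicator_ge_one (show 1 ≤ 2 * k + 1 by omega),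
        if_pos (show k < (t + 1) / 2 by omega)]
    · rw [if_neg h, indicator_univ (show 1 ≤ 2 * k + 1 by omega),
        if_neg (show ¬ k < (t + 1) / 2 by omega), one_mul]
  -- even factors
  have heven : ∀ k : ℕ, indicatorSeries ℚ ((· * (2 * k + 2)) '' cfun t (2 * k + 2)) =
      (if k < t / 2 then (X : PowerSeries ℚ) ^ (2 * k + 2)
        else 1 + (X : PowerSeries ℚ) ^ (2 * k + 2)) := by
    intro k
    rw [cfun, if_neg (by rw [Nat.odd_iff]; omega)]
    by_cases h : 2 * k + 2 ≤ t
    · rw [if_pos (show 2 * k + 2 ≤ t ∧ 1 ≤ 2 * k + 2 from ⟨h, by omega⟩),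
        indicator_one (show 1 ≤ 2 * k + 2 by omega), if_pos (show k < t / 2 by omega)]
    · rw [if_neg (show ¬(2 * k + 2 ≤ t ∧ 1 ≤ 2 * k + 2) by omega),
        indicator_zero_one (show 1 ≤ 2 * k + 2 by omega), if_neg (show ¬ k < t / 2 by omega)]
  rw [Finset.prod_congr rfl fun k _ => hodd k, Finset.prod_congr rfl fun k _ => heven k,
    Finset.prod_mul_distrib]
  -- the pure-power odd product
  have hoddpow : (∏ k ∈ Finset.range K,
      (if k < (t + 1) / 2 then (X : PowerSeries ℚ) ^ (2 * k + 1) else 1)) =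
      (X : PowerSeries ℚ) ^ (((t + 1) / 2) ^ 2) := by
    rw [← Finset.prod_subset (Finset.range_subset_range.2 hu)
      (fun x hx hnx => if_neg (by simp only [Finset.mem_range] at hx hnx ⊢; omega))]
    rw [Finset.prod_congr rfl fun k hk => if_pos (Finset.mem_range.1 hk),
      Finset.prod_pow_eq_pow_sum, sum_odds]
  -- the inverse odd product
  have hoddinv : (∏ k ∈ Finset.range K, (1 - (X : PowerSeries ℚ) ^ (2 * k + 1))⁻¹) =
      (pochFin 1 1 2 K)⁻¹ := by
    rw [poch_odd_eq, prod_inv_eq fun k _ => by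
      rw [constCoeff_one_sub_X_pow (by omega)]; norm_num]
  -- the even product split
  have hsd : (∏ k ∈ Finset.range K,
      (if k < t / 2 then (X : PowerSeries ℚ) ^ (2 * k + 2)
        else 1 + (X : PowerSeries ℚ) ^ (2 * k + 2))) =
      (∏ k ∈ Finset.range K \ Finset.range (t / 2),
        (if k < t / 2 then (X : PowerSeries ℚ) ^ (2 * k + 2)
          else 1 + (X : PowerSeries ℚ) ^ (2 * k + 2))) *
      ∏ k ∈ Finset.range (t / 2),
        (if k < t / 2 then (X : PowerSeries ℚ) ^ (2 * k + 2)
          else 1 + (X : PowerSeries ℚ) ^ (2 * k + 2)) :=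
    (Finset.prod_sdiff (Finset.range_subset_range.2 hm)).symm
  have hin : (∏ k ∈ Finset.range (t / 2),
      (if k < t / 2 then (X : PowerSeries ℚ) ^ (2 * k + 2)
        else 1 + (X : PowerSeries ℚ) ^ (2 * k + 2))) =
      (X : PowerSeries ℚ) ^ (t / 2 * (t / 2 + 1)) := by
    rw [Finset.prod_congr rfl fun k hk => if_pos (Finset.mem_range.1 hk),
      Finset.prod_pow_eq_pow_sum, sum_evens]
  have hout : (∏ k ∈ Finset.range K \ Finset.range (t / 2),
      (if k < t / 2 then (X : PowerSeries ℚ) ^ (2 * k + 2)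
        else 1 + (X : PowerSeries ℚ) ^ (2 * k + 2))) =
      pochFin (-1) 2 2 K * (pochFin (-1) 2 2 (t / 2))⁻¹ := by
    have h1 : (∏ k ∈ Finset.range K \ Finset.range (t / 2),
        (if k < t / 2 then (X : PowerSeries ℚ) ^ (2 * k + 2)
          else 1 + (X : PowerSeries ℚ) ^ (2 * k + 2))) =
        ∏ k ∈ Finset.range K \ Finset.range (t / 2), (1 + (X : PowerSeries ℚ) ^ (2 * k + 2)) := by
      apply Finset.prod_congr rfl
      intro k hk
      rw [Finset.mem_sdiff, Finset.mem_range, Finset.mem_range] at hk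
      exact if_neg (by omega)
    have h2 := Finset.prod_sdiff (f := fun k => 1 + (X : PowerSeries ℚ) ^ (2 * k + 2))
      (Finset.range_subset_range.2 hm)
    have hq : pochFin (-1) 2 2 (t / 2) * (pochFin (-1) 2 2 (t / 2))⁻¹ = 1 :=
      PowerSeries.mul_inv_cancel _ (by rw [constantCoeff_pochFin (-1) (by omega) 2 (t / 2)]; norm_num)
    rw [h1]
    calc (∏ k ∈ Finset.range K \ Finset.range (t / 2), (1 + (X : PowerSeries ℚ) ^ (2 * k + 2)))
        = (∏ k ∈ Finset.range K \ Finset.range (t / 2), (1 + (X : PowerSeries ℚ) ^ (2 * k + 2))) *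
          (pochFin (-1) 2 2 (t / 2) * (pochFin (-1) 2 2 (t / 2))⁻¹) := by rw [hq, mul_one]
      _ = ((∏ k ∈ Finset.range K \ Finset.range (t / 2), (1 + (X : PowerSeries ℚ) ^ (2 * k + 2))) *
          ∏ k ∈ Finset.range (t / 2), (1 + (X : PowerSeries ℚ) ^ (2 * k + 2))) *
          (pochFin (-1) 2 2 (t / 2))⁻¹ := by rw [poch_even_eq (t / 2)]; ring
      _ = pochFin (-1) 2 2 K * (pochFin (-1) 2 2 (t / 2))⁻¹ := by rw [h2, ← poch_even_eq]
  rw [hoddpow, hoddinv, hsd, hin, hout]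
  ring

/-- the number of even-distinct partitions of `N` containing all of `1,…,t` -/
def cnt (t N : ℕ) : ℕ :=
  #(Finset.univ.filter fun l : N.Partition =>
      EvenDistinct l ∧ ∀ i ∈ Finset.Icc 1 t, i ∈ l.parts)

lemma parts_le {N : ℕ} (l : N.Partition) {j : ℕ} (hj : j ∈ l.parts) : j ≤ N := by
  have := Multiset.le_sum_of_mem hj
  rwa [l.parts_sum] at this

lemma cnt_eq_coeff (t N K : ℕ) (hN : N ≤ 2 * K) (ht : t ≤ 2 * K) :
    (cnt t N : ℚ) = coeff (R := ℚ) N (∏ i ∈ Finset.Icc 1 (2 * K), indicatorSeries ℚ ((· * i) '' cfun t i)) := by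
  rw [← partialGF_prop ℚ N (Finset.Icc 1 (2 * K)) (fun i hi => by
      rw [Finset.mem_Icc] at hi; omega) (cfun t) (fun i hi => by
      rw [Finset.mem_Icc] at hi
      rw [cfun]
      split_ifs with h1 h2 h3
      · exfalso; rw [Nat.odd_iff] at h1; omega
      · trivial
      · exfalso; omega
      · exact Or.inl rfl)]
  rw [cnt]
  congr 1
  apply congrArg Finset.card
  ext l
  simp only [Finset.mem_filter, Finset.mem_univ, true_and]
  constructor
  · rintro ⟨hED, hforced⟩
    constructor
    · intro j
      rw [cfun]
      split_ifs with h1 h2 h3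
      · -- odd, forced
        have hmem : j ∈ l.parts := hforced j (Finset.mem_Icc.2 ⟨by
          rcases h1 with ⟨w, hw⟩; omega, h2⟩)
        exact Multiset.one_le_count_iff_mem.2 hmem
      · trivial
      · -- even, forced: count = 1
        have hmem : j ∈ l.parts := hforced j (Finset.mem_Icc.2 ⟨h3.2, h3.1⟩)
        have h1le : 1 ≤ l.parts.count j := Multiset.one_le_count_iff_mem.2 hmem
        have hle1 : l.parts.count j ≤ 1 := hED j (Nat.even_iff.2 (by
          rw [Nat.odd_iff] at h1; omega))
        have : l.parts.count j = 1 := le_antisymm hle1 h1le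
        exact this
      · -- even, unforced: count ∈ {0,1}
        have hle1 : l.parts.count j ≤ 1 := hED j (Nat.even_iff.2 (by
          rw [Nat.odd_iff] at h1; omega))
        interval_cases h : l.parts.count j
        · exact Or.inl rfl
        · exact Or.inr rfl
    · intro j hj
      rw [Finset.mem_Icc]
      exact ⟨(l.parts_pos hj), le_trans (parts_le l hj) hN⟩
  · rintro ⟨hc, -⟩
    constructor
    · intro i hi
      have := hc i
      rw [cfun, if_neg (by rw [Nat.odd_iff]; rw [Nat.even_iff] at hi; omega)] at this
      split_ifs at this with h2
      · simp only [Set.mem_singleton_iff] at this; omega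
      · simp only [Set.mem_insert_iff, Set.mem_singleton_iff] at this; omega
    · intro i hi
      rw [Finset.mem_Icc] at hi
      have := hc i
      rw [cfun] at this
      apply Multiset.one_le_count_iff_mem.1
      by_cases ho : Odd i
      · rw [if_pos ho, if_pos (show i ≤ t by omega)] at this
        exact this
      · rw [if_neg ho, if_pos (show i ≤ t ∧ 1 ≤ i from ⟨by omega, by omega⟩)] at this
        simp only [Set.mem_singleton_iff] at this
        omega

-- pmex lemmas
lemma pmex_set_nonempty {N : ℕ} (l : N.Partition) :
    {k : ℕ | 0 < k ∧ k ∉ l.parts}.Nonempty :=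
  ⟨N + 1, by omega, fun h => by have := parts_le l h; omega⟩

lemma pmex_le {N : ℕ} (l : N.Partition) : pmex l ≤ N + 1 :=
  Nat.sInf_le ⟨by omega, fun h => by have := parts_le l h; omega⟩

lemma pmex_pos {N : ℕ} (l : N.Partition) : 0 < pmex l :=
  (Nat.sInf_mem (pmex_set_nonempty l)).1

lemma pmex_not_mem {N : ℕ} (l : N.Partition) : pmex l ∉ l.parts :=
  (Nat.sInf_mem (pmex_set_nonempty l)).2

lemma lt_pmex_iff {N : ℕ} (l : N.Partition) (t : ℕ) :
    t < pmex l ↔ ∀ i ∈ Finset.Icc 1 t, i ∈ l.parts := by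
  constructor
  · intro h i hi
    rw [Finset.mem_Icc] at hi
    by_contra hmem
    have : i ∈ {k : ℕ | 0 < k ∧ k ∉ l.parts} := ⟨by omega, hmem⟩
    have := Nat.sInf_le this
    rw [pmex] at h
    omega
  · intro h
    by_contra hlt
    push_neg at hlt
    have hmem := Nat.sInf_mem (pmex_set_nonempty l)
    have : pmex l ∈ l.parts := h _ (Finset.mem_Icc.2 ⟨hmem.1, hlt⟩)
    exact hmem.2 this

lemma pmex_eq_iff {N : ℕ} (l : N.Partition) (m : ℕ) :
    pmex l = 2 * m + 1 ↔
      (∀ i ∈ Finset.Icc 1 (2 * m), i ∈ l.parts) ∧ ¬(∀ i ∈ Finset.Icc 1 (2 * m + 1), i ∈ l.parts) := by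
  rw [← lt_pmex_iff, ← lt_pmex_iff]
  omega

-- splitting cnt
lemma cnt_split (m N : ℕ) :
    cnt (2 * m) N = cnt (2 * m + 1) N +
      #(Finset.univ.filter fun l : N.Partition => EvenDistinct l ∧ pmex l = 2 * m + 1) := by
  rw [cnt, cnt]
  rw [← Finset.card_filter_add_card_filter_not
    (s := Finset.univ.filter fun l : N.Partition =>
      EvenDistinct l ∧ ∀ i ∈ Finset.Icc 1 (2 * m), i ∈ l.parts)
    (fun l => ∀ i ∈ Finset.Icc 1 (2 * m + 1), i ∈ l.parts)]
  congr 1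
  · rw [Finset.filter_filter]
    apply congrArg Finset.card
    ext l
    simp only [Finset.mem_filter, Finset.mem_univ, true_and]
    constructor
    · rintro ⟨⟨hED, -⟩, hall⟩; exact ⟨hED, hall⟩
    · rintro ⟨hED, hall⟩
      exact ⟨⟨hED, fun i hi => hall i (by rw [Finset.mem_Icc] at hi ⊢; omega)⟩, hall⟩
  · rw [Finset.filter_filter]
    apply congrArg Finset.card
    ext l
    simp only [Finset.mem_filter, Finset.mem_univ, true_and]
    rw [pmex_eq_iff]
    constructor
    · rintro ⟨⟨hED, hall⟩, hnot⟩; exact ⟨hED, hall, hnot⟩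
    · rintro ⟨hED, hall, hnot⟩; exact ⟨⟨hED, hall⟩, hnot⟩

lemma cnt_zero_of_large (t N : ℕ) (h : N < t) (hN : 1 ≤ t) : cnt t N = 0 := by
  rw [cnt, Finset.card_eq_zero, Finset.eq_empty_iff_forall_notMem]
  intro l hl
  simp only [Finset.mem_filter, Finset.mem_univ, true_and] at hl
  obtain ⟨-, hall⟩ := hl
  have : t ∈ l.parts := hall t (Finset.mem_Icc.2 ⟨hN, le_rfl⟩)
  have := parts_le l this
  omega

lemma aoed_eq_sum (N : ℕ) :
    aoed N = ∑ m ∈ Finset.range (N + 1),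
      #(Finset.univ.filter fun l : N.Partition => EvenDistinct l ∧ pmex l = 2 * m + 1) := by
  rw [aoed]
  rw [Finset.card_eq_sum_card_fiberwise (f := fun l : N.Partition => pmex l / 2)
    (t := Finset.range (N + 1)) (fun l hl => by
      show pmex l / 2 ∈ Finset.range (N + 1)
      rw [Finset.mem_range]
      have := pmex_le l
      omega)]
  apply Finset.sum_congr rfl
  intro m _
  rw [Finset.filter_filter]
  apply congrArg Finset.card
  ext l
  simp only [Finset.mem_filter, Finset.mem_univ, true_and]
  rw [Nat.odd_iff]
  constructor
  · rintro ⟨⟨hED, hodd⟩, hdiv⟩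
    exact ⟨hED, by omega⟩
  · rintro ⟨hED, heq⟩
    exact ⟨⟨hED, by omega⟩, by omega⟩

lemma aoed_eq (N : ℕ) :
    (aoed N : ℚ) = ∑ m ∈ Finset.range (N + 1), ((cnt (2 * m) N : ℚ) - (cnt (2 * m + 1) N : ℚ)) := by
  rw [aoed_eq_sum]
  push_cast
  apply Finset.sum_congr rfl
  intro m _
  have := cnt_split m N
  have : (cnt (2 * m) N : ℚ) = (cnt (2 * m + 1) N : ℚ) +
      (#(Finset.univ.filter fun l : N.Partition => EvenDistinct l ∧ pmex l = 2 * m + 1) : ℚ) := by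
    exact_mod_cast congrArg (Nat.cast : ℕ → ℚ) this
  linarith

-- tsum of X-power-weighted series
lemma coeff_X_pow_mul_zero {e N : ℕ} (g : PowerSeries ℚ) (h : N < e) :
    coeff (R := ℚ) N ((X : PowerSeries ℚ) ^ e * g) = 0 := by
  rw [mul_comm, PowerSeries.coeff_mul_X_pow', if_neg (by omega)]

lemma hasSum_X_pow_mul (e : ℕ → ℕ) (he : ∀ n, n ≤ e n) (g : ℕ → PowerSeries ℚ) :
    HasSum (fun n => (X : PowerSeries ℚ) ^ e n * g n)
      (PowerSeries.mk fun j => ∑ n ∈ Finset.range (j + 1),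
        coeff (R := ℚ) j ((X : PowerSeries ℚ) ^ e n * g n)) := by
  apply hasSum_of_coeff
  intro N s hs
  rw [map_sum, coeff_mk]
  refine (Finset.sum_subset hs fun x _ hx => ?_).symm
  rw [Finset.mem_range] at hx
  exact coeff_X_pow_mul_zero _ (by have := he x; omega)

lemma tsum_X_pow_mul_eqMod (e : ℕ → ℕ) (he : ∀ n, n ≤ e n) (g : ℕ → PowerSeries ℚ) (N : ℕ) :
    EqMod N (∑' n, (X : PowerSeries ℚ) ^ e n * g n)
      (∑ n ∈ Finset.range (N + 1), (X : PowerSeries ℚ) ^ e n * g n) := by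
  intro j hj
  rw [(hasSum_X_pow_mul e he g).tsum_eq, coeff_mk, map_sum]
  apply Finset.sum_subset (by intro x hx; rw [Finset.mem_range] at hx ⊢; omega)
  intro x _ hx
  rw [Finset.mem_range] at hx
  exact coeff_X_pow_mul_zero _ (by have := he x; omega)

lemma cnt_even_eq (m N : ℕ) (hm : m ≤ N) :
    (cnt (2 * m) N : ℚ) = coeff (R := ℚ) N ((X : PowerSeries ℚ) ^ (2 * m ^ 2 + m) *
      pochFin (-1) 2 2 (N + 1) * (pochFin 1 1 2 (N + 1))⁻¹ * (pochFin (-1) 2 2 m)⁻¹) := by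
  have h := (cnt_eq_coeff (2 * m) N (N + 1) (by omega) (by omega)).trans
    (congrArg (coeff (R := ℚ) N) (prod_eval (2 * m) (N + 1) (by omega)))
  rw [h]
  congr 2
  · congr 1
    have h1 : (2 * m + 1) / 2 = m := by omega
    have h2 : 2 * m / 2 = m := by omega
    rw [h1, h2]; ring
  · congr 1
    have h2 : 2 * m / 2 = m := by omega
    rw [h2]

lemma cnt_odd_eq (m N : ℕ) (hm : m ≤ N) :
    (cnt (2 * m + 1) N : ℚ) = coeff (R := ℚ) N ((X : PowerSeries ℚ) ^ ((2 * m + 1) * (m + 1)) *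
      pochFin (-1) 2 2 (N + 1) * (pochFin 1 1 2 (N + 1))⁻¹ * (pochFin (-1) 2 2 m)⁻¹) := by
  have h := (cnt_eq_coeff (2 * m + 1) N (N + 1) (by omega) (by omega)).trans
    (congrArg (coeff (R := ℚ) N) (prod_eval (2 * m + 1) (N + 1) (by omega)))
  rw [h]
  congr 2
  · congr 1
    have h1 : (2 * m + 1 + 1) / 2 = m + 1 := by omega
    have h2 : (2 * m + 1) / 2 = m := by omega
    rw [h1, h2]; ring
  · congr 1
    have h2 : (2 * m + 1) / 2 = m := by omega
    rw [h2]

end Aux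

open Aux in
theorem stmt_11 :
    (∑' n : ℕ, PowerSeries.C (R := ℚ) (aoed n : ℚ) * PowerSeries.X ^ n) =
      pochInf (-1) 2 2 * (pochInf 1 1 2)⁻¹ *
        ((∑' n : ℕ, PowerSeries.X ^ (2 * n ^ 2 + n) * (pochFin (-1) 2 2 n)⁻¹) -
          ∑' n : ℕ, PowerSeries.X ^ ((2 * n + 1) * (n + 1)) * (pochFin (-1) 2 2 n)⁻¹) := by
  -- identify the left-hand side
  have hL : HasSum (fun n => PowerSeries.C (R := ℚ) (aoed n : ℚ) * PowerSeries.X ^ n)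
      (PowerSeries.mk fun n => (aoed n : ℚ)) := by
    apply hasSum_of_coeff
    intro N s hs
    rw [map_sum, coeff_mk]
    rw [Finset.sum_eq_single_of_mem N (hs (by simp))]
    · rw [PowerSeries.coeff_C_mul, PowerSeries.coeff_X_pow, if_pos rfl, mul_one]
    · intro b _ hb
      rw [PowerSeries.coeff_C_mul, PowerSeries.coeff_X_pow, if_neg (Ne.symm hb), mul_zero]
  rw [hL.tsum_eq]
  apply PowerSeries.ext
  intro N
  rw [coeff_mk]
  -- right-hand side mod N
  have h1 := pochInf_eqMod (-1) 2 2 (by omega) (by omega) N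
  have h2 := (pochInf_eqMod 1 1 2 (by omega) (by omega) N).inv
  have h3 := tsum_X_pow_mul_eqMod (fun n => 2 * n ^ 2 + n) (fun n => by nlinarith)
    (fun n => (pochFin (-1) 2 2 n)⁻¹) N
  have h4 := tsum_X_pow_mul_eqMod (fun n => (2 * n + 1) * (n + 1)) (fun n => by nlinarith)
    (fun n => (pochFin (-1) 2 2 n)⁻¹) N
  have htot := (h1.mul h2).mul (h3.sub h4)
  rw [htot N le_rfl]
  -- now everything is finite
  have hring : pochFin (-1) 2 2 (N + 1) * (pochFin 1 1 2 (N + 1))⁻¹ *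
      ((∑ n ∈ Finset.range (N + 1), (X : PowerSeries ℚ) ^ (2 * n ^ 2 + n) * (pochFin (-1) 2 2 n)⁻¹) -
        ∑ n ∈ Finset.range (N + 1), (X : PowerSeries ℚ) ^ ((2 * n + 1) * (n + 1)) * (pochFin (-1) 2 2 n)⁻¹) =
      ∑ n ∈ Finset.range (N + 1),
        ((X : PowerSeries ℚ) ^ (2 * n ^ 2 + n) * pochFin (-1) 2 2 (N + 1) *
            (pochFin 1 1 2 (N + 1))⁻¹ * (pochFin (-1) 2 2 n)⁻¹ -
          (X : PowerSeries ℚ) ^ ((2 * n + 1) * (n + 1)) * pochFin (-1) 2 2 (N + 1) *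
            (pochFin 1 1 2 (N + 1))⁻¹ * (pochFin (-1) 2 2 n)⁻¹) := by
    rw [Finset.sum_sub_distrib, mul_sub, Finset.mul_sum, Finset.mul_sum]
    congr 1 <;> exact Finset.sum_congr rfl fun n _ => by ring
  rw [hring, map_sum]
  rw [aoed_eq]
  apply Finset.sum_congr rfl
  intro m hm
  rw [Finset.mem_range] at hm
  rw [map_sub, cnt_even_eq m N (by omega), cnt_odd_eq m N (by omega)]

end
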